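/- Let 0 < ε₀ < 1 and ρ > 0. There exists a constant c > 0, depending only on N, Λ, α, β, ε₀ and ρ, such that the following holds: if u is a bounded Borel measurable function on ℝ^N satisfying L_ε^- u ≤ ρ in Q_{10√N} and u ≥ 0 in ℝ^N, for some ε with ε₀/2 ≤ ε ≤ ε₀, and if |{u > K} ∩ Q_1| > c/K for some K > 0, then u > 1 everywhere in Q_1. -/

import Mathlib

open MeasureTheory Metric

/-- The second-order difference `δu(x,y) = u(x+y) + u(x−y) − 2u(x)`. -/
noncomputable def ddiff {N : ℕ} (u : EuclideanSpace ℝ (Fin N) → ℝ)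
    (x y : EuclideanSpace ℝ (Fin N)) : ℝ :=
  u (x + y) + u (x - y) - 2 * u x

/-- The minimal Pucci-type operator
`L_ε^- u(x) = (1/(2ε²))(α·inf_{z ∈ B_Λ} δu(x,εz) + β·⨍_{B_1} δu(x,εy) dy)`. -/
noncomputable def Lminus {N : ℕ} (Λ α β ε : ℝ) (u : EuclideanSpace ℝ (Fin N) → ℝ)
    (x : EuclideanSpace ℝ (Fin N)) : ℝ :=
  (1 / (2 * ε ^ 2)) *
    (α * sInf ((fun z => ddiff u x (ε • z)) '' ball (0 : EuclideanSpace ℝ (Fin N)) Λ)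
      + β * ⨍ y in ball (0 : EuclideanSpace ℝ (Fin N)) 1, ddiff u x (ε • y))

/-- The open axis-parallel cube with center having coordinates `c : Fin N → ℝ` and side
length `r`. -/
def cube {N : ℕ} (c : Fin N → ℝ) (r : ℝ) : Set (EuclideanSpace ℝ (Fin N)) :=
  {y | ∀ i, |y i - c i| < r / 2}

namespace MESecond

open scoped ENNReal

variable {N : ℕ}

local notation "E" => EuclideanSpace ℝ (Fin N)

theorem coord_le (x : E) (i : Fin N) : |x i| ≤ ‖x‖ := by
  rw [EuclideanSpace.norm_eq x, ← Real.norm_eq_abs]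
  rw [show ‖x i‖ = Real.sqrt (‖x i‖^2) by rw [Real.sqrt_sq (norm_nonneg _)]]
  exact Real.sqrt_le_sqrt
    (Finset.single_le_sum (f := fun j => ‖x j‖ ^ 2) (fun j _ => sq_nonneg _) (Finset.mem_univ i))

theorem norm_le_of_cube (x : E) {r : ℝ} (hr : 0 ≤ r) (h : ∀ i, |x i| < r) :
    ‖x‖ ≤ Real.sqrt N * r := by
  rw [EuclideanSpace.norm_eq x]
  calc Real.sqrt (∑ i, ‖x i‖^2) ≤ Real.sqrt (∑ _i : Fin N, r^2) := by
        apply Real.sqrt_le_sqrt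
        apply Finset.sum_le_sum
        intro j _
        have := (h j).le
        rw [Real.norm_eq_abs]
        nlinarith [abs_nonneg (x j)]
    _ = Real.sqrt N * r := by
        rw [Finset.sum_const, Finset.card_univ, Fintype.card_fin, nsmul_eq_mul,
          Real.sqrt_mul (by positivity), Real.sqrt_sq hr]

theorem mem_bigcube (hN : 1 ≤ N) {x : E} (hx : ‖x‖ < 2 * Real.sqrt N + 1) :
    x ∈ cube (fun _ : Fin N => (0 : ℝ)) (10 * Real.sqrt N) := by
  have h1 : (1:ℝ) ≤ Real.sqrt N := Real.one_le_sqrt.mpr (by exact_mod_cast hN)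
  intro i
  have h2 := coord_le x i
  simp only [sub_zero]
  calc |x i| ≤ ‖x‖ := h2
    _ < 2 * Real.sqrt N + 1 := hx
    _ ≤ 10 * Real.sqrt N / 2 := by nlinarith

theorem cube_norm (x : E) (hx : x ∈ cube (fun _ : Fin N => (0 : ℝ)) 1) :
    ‖x‖ ≤ Real.sqrt N / 2 := by
  have h : ‖x‖ ≤ Real.sqrt N * (1/2) := norm_le_of_cube x (by norm_num)
    (fun i => by simpa [div_eq_mul_inv] using hx i)
  linarith

theorem g_integrable (u : E → ℝ) (hu : Measurable u) {C : ℝ} (hC : ∀ x, |u x| ≤ C)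
    (x : E) (ε : ℝ) :
    IntegrableOn (fun y => u (x + ε • y) + u (x - ε • y)) (ball (0:E) 1) volume := by
  have hmap1 : Measurable fun y : E => x + ε • y :=
    measurable_const.add (measurable_id.const_smul ε)
  have hmap2 : Measurable fun y : E => x - ε • y :=
    measurable_const.sub (measurable_id.const_smul ε)
  have hmeas : Measurable fun y : E => u (x + ε • y) + u (x - ε • y) :=
    (hu.comp hmap1).add (hu.comp hmap2)
  apply Measure.integrableOn_of_bounded (M := 2 * C) measure_ball_lt_top.ne
    hmeas.aestronglyMeasurable
  filter_upwards with y
  obtain ⟨h1, h2⟩ := abs_le.mp (hC (x + ε • y))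
  obtain ⟨h3, h4⟩ := abs_le.mp (hC (x - ε • y))
  rw [Real.norm_eq_abs, abs_le]
  constructor <;> linarith

/-- The key pointwise inequality extracted from `Lminus u ≤ ρ`. -/
theorem key (Λ α β ε ρ : ℝ) (hβ1 : β ≤ 1) (hα : α = 1 - β)
    (hΛ : 1 ≤ Λ) (hε : 0 < ε) (hε1 : ε ≤ 1) (hρ : 0 ≤ ρ)
    (u : E → ℝ) (hu : Measurable u) {C : ℝ} (hC : ∀ x, |u x| ≤ C)
    (hpos : ∀ x, 0 ≤ u x) (x : E)
    (hL : Lminus Λ α β ε u x ≤ ρ) :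
    β * ∫ y in ball (0:E) 1, (u (x + ε • y) + u (x - ε • y))
      ≤ 2 * (volume (ball (0:E) 1)).toReal * (ρ + u x) := by
  set B := ball (0:E) 1 with hB
  set vB := (volume B).toReal with hvB
  have hvBpos : 0 < vB := by
    apply ENNReal.toReal_pos (measure_ball_pos volume _ one_pos).ne' measure_ball_lt_top.ne
  have hint : IntegrableOn (fun y => u (x + ε • y) + u (x - ε • y)) B volume :=
    g_integrable u hu hC x ε
  have havg : (⨍ y in B, ddiff u x (ε • y))
      = vB⁻¹ * ((∫ y in B, (u (x + ε • y) + u (x - ε • y))) - 2 * u x * vB) := by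
    rw [setAverage_eq]
    have h : ∀ y : E, ddiff u x (ε • y) = (u (x + ε • y) + u (x - ε • y)) - 2 * u x := by
      intro y; rfl
    rw [show (∫ y in B, ddiff u x (ε • y))
        = ∫ y in B, ((u (x + ε • y) + u (x - ε • y)) - 2 * u x) from by
      apply integral_congr_ae; filter_upwards with y; exact h y]
    rw [integral_sub hint (integrableOn_const measure_ball_lt_top.ne)]
    rw [setIntegral_const]
    rw [show volume.real B = vB from rfl]
    simp only [smul_eq_mul]
    ring
  have hinf : -(2 * u x) ≤ sInf ((fun z => ddiff u x (ε • z)) '' ball (0:E) Λ) := by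
    apply le_csInf
    · exact (Set.Nonempty.image _ ⟨0, by simp [mem_ball]; linarith⟩)
    · rintro b ⟨z, _, rfl⟩
      have h1 := hpos (x + ε • z); have h2 := hpos (x - ε • z)
      simp only [ddiff]; linarith
  have h2ε : (0:ℝ) < 2 * ε ^ 2 := by positivity
  rw [Lminus] at hL
  have hL' : α * sInf ((fun z => ddiff u x (ε • z)) '' ball (0:E) Λ)
      + β * (⨍ y in B, ddiff u x (ε • y)) ≤ 2 * ε ^ 2 * ρ := by
    rw [div_mul_eq_mul_div, one_mul, div_le_iff₀ h2ε] at hL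
    linarith [hL]
  have hα0 : 0 ≤ α := by rw [hα]; linarith
  have hinf' : α * (-(2 * u x)) ≤ α * sInf ((fun z => ddiff u x (ε • z)) '' ball (0:E) Λ) :=
    mul_le_mul_of_nonneg_left hinf hα0
  have hεsq : ε ^ 2 ≤ 1 := by nlinarith
  have hε230 : 2 * ε ^ 2 * ρ ≤ 2 * ρ := by nlinarith [mul_le_mul_of_nonneg_right hεsq hρ]
  have h3 : β * (⨍ y in B, ddiff u x (ε • y)) ≤ 2 * ρ + α * (2 * u x) := by linarith
  rw [havg] at h3
  have hux : 0 ≤ u x := hpos x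
  have h4 : β * ((∫ y in B, (u (x + ε • y) + u (x - ε • y))) - 2 * u x * vB)
      ≤ (2 * ρ + α * (2 * u x)) * vB := by
    have h5 := mul_le_mul_of_nonneg_right h3 hvBpos.le
    calc β * ((∫ y in B, (u (x + ε • y) + u (x - ε • y))) - 2 * u x * vB)
        = β * (vB⁻¹ * ((∫ y in B, (u (x + ε • y) + u (x - ε • y))) - 2 * u x * vB)) * vB := by
          field_simp
      _ ≤ (2 * ρ + α * (2 * u x)) * vB := h5
  rw [hα] at h4
  linarith [h4]

theorem int_lb (u : E → ℝ) (hu : Measurable u) {C : ℝ} (hC : ∀ x, |u x| ≤ C)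
    (hpos : ∀ x, 0 ≤ u x) (x : E) (ε : ℝ) {m : ℝ}
    {A : Set E} (hA : MeasurableSet A) (hAB : A ⊆ ball (0:E) 1)
    (hmA : ∀ y ∈ A, m ≤ u (x + ε • y)) :
    m * (volume A).toReal ≤ ∫ y in ball (0:E) 1, (u (x + ε • y) + u (x - ε • y)) := by
  have hint : IntegrableOn (fun y => u (x + ε • y) + u (x - ε • y)) (ball (0:E) 1) volume :=
    g_integrable u hu hC x ε
  have hμA : volume A ≠ ⊤ := (lt_of_le_of_lt (measure_mono hAB) measure_ball_lt_top).ne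
  calc m * (volume A).toReal
      ≤ ∫ y in A, (u (x + ε • y) + u (x - ε • y)) := by
        apply setIntegral_ge_of_const_le_real hA hμA
        · intro y hy
          have := hpos (x - ε • y)
          linarith [hmA y hy]
        · exact hint.mono_set hAB
    _ ≤ ∫ y in ball (0:E) 1, (u (x + ε • y) + u (x - ε • y)) := by
        apply setIntegral_mono_set hint
        · filter_upwards with y
          have := hpos (x + ε • y); have := hpos (x - ε • y)
          simp only [Pi.zero_apply]; linarith
        · exact HasSubset.Subset.eventuallyLE hAB

theorem geom (c : E) (hc : ‖c‖ ≤ 5/4) :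
    ∃ c' : E, ball c' (1/8) ⊆ ball c (1/2) ∩ ball (0:E) 1 := by
  by_cases h : ‖c‖ ≤ 7/8
  · refine ⟨c, fun y hy => ?_⟩
    rw [mem_ball] at hy
    constructor
    · rw [mem_ball]; linarith
    · rw [mem_ball, dist_zero_right]
      have h2 : ‖y - c‖ < 1/8 := by rwa [← dist_eq_norm]
      calc ‖y‖ ≤ ‖y - c‖ + ‖c‖ := by
            simpa using norm_add_le (y - c) c
        _ < 1 := by linarith
  · push_neg at h
    have hc0 : (0:ℝ) < ‖c‖ := by linarith
    refine ⟨((7/8) / ‖c‖) • c, fun y hy => ?_⟩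
    rw [mem_ball] at hy
    have hyc : ‖y - ((7/8) / ‖c‖) • c‖ < 1/8 := by rwa [← dist_eq_norm]
    have hnc' : ‖((7/8) / ‖c‖) • c‖ = 7/8 := by
      rw [norm_smul, Real.norm_eq_abs, abs_of_pos (by positivity)]
      field_simp
    have hcc' : ‖c - ((7/8) / ‖c‖) • c‖ = ‖c‖ - 7/8 := by
      have h1 : c - ((7/8) / ‖c‖) • c = (1 - (7/8) / ‖c‖) • c := by
        rw [sub_smul, one_smul]
      rw [h1, norm_smul, Real.norm_eq_abs, abs_of_pos]
      · field_simp
      · rw [sub_pos, div_lt_one hc0]; linarith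
    constructor
    · rw [mem_ball, dist_eq_norm]
      calc ‖y - c‖ ≤ ‖y - ((7/8) / ‖c‖) • c‖ + ‖((7/8) / ‖c‖) • c - c‖ := by
            simpa using norm_add_le (y - ((7/8) / ‖c‖) • c) (((7/8) / ‖c‖) • c - c)
        _ < 1/2 := by
            rw [norm_sub_rev (((7/8) / ‖c‖) • c) c, hcc']
            linarith
    · rw [mem_ball, dist_zero_right]
      calc ‖y‖ ≤ ‖y - ((7/8) / ‖c‖) • c‖ + ‖((7/8) / ‖c‖) • c‖ := by
            simpa using norm_add_le (y - ((7/8) / ‖c‖) • c) (((7/8) / ‖c‖) • c)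
        _ < 1 := by rw [hnc']; linarith

theorem preimage_meas_ge (S : Set E) (x : E) {ε : ℝ}
    (hε : 0 < ε) (hε1 : ε ≤ 1) :
    volume S ≤ volume ((fun y => x + ε • y) ⁻¹' S) := by
  have h : (fun y : E => x + ε • y) ⁻¹' S = (ε • ·) ⁻¹' ((x + ·) ⁻¹' S) := by
    ext y; simp [Set.mem_preimage]
  rw [h, Measure.addHaar_preimage_smul volume (ne_of_gt hε),
    measure_preimage_add]
  rw [finrank_euclideanSpace_fin]
  have h1 : (1:ℝ) ≤ |(ε ^ N)⁻¹| := by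
    rw [abs_of_pos (by positivity)]
    rw [show (1:ℝ) = 1⁻¹ by norm_num]
    exact inv_anti₀ (by positivity) (by simpa using pow_le_one₀ hε.le hε1)
  calc volume S = 1 * volume S := (one_mul _).symm
    _ ≤ ENNReal.ofReal |(ε ^ N)⁻¹| * volume S := by
        gcongr
        exact ENNReal.one_le_ofReal.mpr h1

theorem exists_good_center {S : Set E} (hS : MeasurableSet S) {R₁ r : ℝ}
    (hr : 0 < r) (hR : 0 < R₁) (hsub : S ⊆ ball (0:E) R₁) (hSpos : 0 < volume S) :
    ∃ x₀ ∈ ball (0:E) (R₁ + r),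
      volume S * volume (ball (0:E) r) / (2 * volume (ball (0:E) (R₁ + r)))
        ≤ volume (S ∩ ball x₀ r) := by
  set R := R₁ + r with hRdef
  set B : Set E := ball (0:E) (R₁ + r) with hBdef
  set a : ℝ≥0∞ := volume S * volume (ball (0:E) r) / (2 * volume B) with ha
  by_contra hcon
  push_neg at hcon
  have hSfin : volume S ≠ ⊤ := ((measure_mono hsub).trans_lt measure_ball_lt_top).ne
  have hvr : 0 < volume (ball (0:E) r) := measure_ball_pos volume _ hr
  have hvrfin : volume (ball (0:E) r) ≠ ⊤ := measure_ball_lt_top.ne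
  have hB0 : volume B ≠ 0 := (measure_ball_pos volume _ (by linarith)).ne'
  have hBfin : volume B ≠ ⊤ := measure_ball_lt_top.ne
  set G : E × E → ℝ≥0∞ := fun p =>
    B.indicator 1 p.1 * (S.indicator 1 p.2 * (ball (0:E) r).indicator 1 (p.1 - p.2)) with hG
  have hGmeas : Measurable G := by
    apply Measurable.mul
    · exact (measurable_one.indicator measurableSet_ball).comp measurable_fst
    · apply Measurable.mul
      · exact (measurable_one.indicator hS).comp measurable_snd
      · exact (measurable_one.indicator measurableSet_ball).comp
          (measurable_fst.sub measurable_snd)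
  have hinner : ∀ x : E, (∫⁻ y, S.indicator 1 y * (ball (0:E) r).indicator 1 (x - y))
      = volume (S ∩ ball x r) := by
    intro x
    have h : ∀ y : E, S.indicator (1 : E → ℝ≥0∞) y * (ball (0:E) r).indicator (1 : E → ℝ≥0∞) (x - y)
        = (S ∩ ball x r).indicator (1 : E → ℝ≥0∞) y := by
      intro y
      have hiff : x - y ∈ ball (0:E) r ↔ y ∈ ball x r := by
        rw [mem_ball, mem_ball, dist_zero_right, dist_eq_norm, norm_sub_rev x y]
      rcases em (y ∈ S) with hy1 | hy1
      · rcases em (y ∈ ball x r) with hy2 | hy2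
        · rw [Set.indicator_of_mem hy1, Set.indicator_of_mem (hiff.mpr hy2),
            Set.indicator_of_mem (Set.mem_inter hy1 hy2)]
          simp
        · rw [Set.indicator_of_notMem (fun h => hy2 (hiff.mp h)),
            Set.indicator_of_notMem (fun h : y ∈ S ∩ ball x r => hy2 h.2)]
          simp
      · rw [Set.indicator_of_notMem hy1,
          Set.indicator_of_notMem (fun h : y ∈ S ∩ ball x r => hy1 h.1)]
        simp
    rw [lintegral_congr h, lintegral_indicator_one (hS.inter measurableSet_ball)]
  have hswap : (∫⁻ x, ∫⁻ y, G (x, y)) = ∫⁻ y, ∫⁻ x, G (x, y) :=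
    lintegral_lintegral_swap hGmeas.aemeasurable
  have hLHS : (∫⁻ x, ∫⁻ y, G (x, y)) ≤ a * volume B := by
    have h1 : ∀ x : E, (∫⁻ y, G (x, y)) = B.indicator (fun x => volume (S ∩ ball x r)) x := by
      intro x
      rw [hG]
      simp only
      rw [lintegral_const_mul' _ _ (by
        by_cases h : x ∈ B <;> simp [Set.indicator_apply, h])]
      rw [hinner x]
      by_cases h : x ∈ B <;> simp [Set.indicator_apply, h]
    calc (∫⁻ x, ∫⁻ y, G (x, y)) = ∫⁻ x, B.indicator (fun x => volume (S ∩ ball x r)) x := by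
          exact lintegral_congr h1
      _ = ∫⁻ x in B, volume (S ∩ ball x r) := by
          rw [lintegral_indicator measurableSet_ball]
      _ ≤ ∫⁻ _x in B, a := by
          apply setLIntegral_mono' measurableSet_ball
          intro x hx
          exact (hcon x hx).le
      _ = a * volume B := by rw [setLIntegral_const]
  have hRHS : volume S * volume (ball (0:E) r) ≤ ∫⁻ y, ∫⁻ x, G (x, y) := by
    have h1 : ∀ y : E, y ∈ S → (∫⁻ x, B.indicator 1 x * (ball (0:E) r).indicator 1 (x - y))
        = volume (ball (0:E) r) := by
      intro y hy
      have hyR : ‖y‖ < R₁ := by simpa [mem_ball, dist_zero_right] using hsub hy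
      have hball : ball y r ⊆ B := by
        intro z hz
        rw [hBdef, mem_ball, dist_zero_right]
        rw [mem_ball, dist_eq_norm] at hz
        calc ‖z‖ ≤ ‖z - y‖ + ‖y‖ := by simpa using norm_add_le (z - y) y
          _ < R₁ + r := by linarith
      have h : ∀ x : E, B.indicator (1 : E → ℝ≥0∞) x * (ball (0:E) r).indicator (1 : E → ℝ≥0∞) (x - y)
          = (ball y r).indicator (1 : E → ℝ≥0∞) x := by
        intro x
        have hmem : (x - y ∈ ball (0:E) r) ↔ x ∈ ball y r := by
          rw [mem_ball, mem_ball, dist_zero_right, dist_eq_norm]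
        by_cases hx2 : x ∈ ball y r
        · have hx1 : x ∈ B := hball hx2
          simp [Set.indicator_apply, hx1, hx2, hmem.mpr hx2]
        · have h3 : x - y ∉ ball (0:E) r := fun h => hx2 (hmem.mp h)
          simp [Set.indicator_apply, hx2, h3]
      rw [lintegral_congr h, lintegral_indicator_one measurableSet_ball,
        Measure.addHaar_ball_center]
    have h2 : ∀ y : E, S.indicator (fun _ => volume (ball (0:E) r)) y ≤ ∫⁻ x, G (x, y) := by
      intro y
      by_cases hy : y ∈ S
      · rw [Set.indicator_of_mem hy]
        rw [← h1 y hy]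
        apply lintegral_mono
        intro x
        rw [hG]
        simp only [Set.indicator_of_mem hy, Pi.one_apply, one_mul]
        exact le_refl _
      · simp [Set.indicator_of_notMem hy]
    calc volume S * volume (ball (0:E) r)
        = ∫⁻ y, S.indicator (fun _ => volume (ball (0:E) r)) y := by
          rw [lintegral_indicator hS, setLIntegral_const, mul_comm]
      _ ≤ ∫⁻ y, ∫⁻ x, G (x, y) := lintegral_mono h2
  have hcomb : volume S * volume (ball (0:E) r) ≤ a * volume B := by
    calc volume S * volume (ball (0:E) r) ≤ ∫⁻ y, ∫⁻ x, G (x, y) := hRHS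
      _ = ∫⁻ x, ∫⁻ y, G (x, y) := hswap.symm
      _ ≤ a * volume B := hLHS
  have haB : a * volume B = volume S * volume (ball (0:E) r) / 2 := by
    calc a * volume B
        = volume S * volume (ball (0:E) r) * (2⁻¹ * (volume B)⁻¹) * volume B := by
          rw [ha, div_eq_mul_inv, ENNReal.mul_inv (Or.inl (by norm_num)) (Or.inl (by norm_num))]
      _ = volume S * volume (ball (0:E) r) * 2⁻¹ * ((volume B)⁻¹ * volume B) := by ring
      _ = volume S * volume (ball (0:E) r) * 2⁻¹ := by
          rw [ENNReal.inv_mul_cancel hB0 hBfin, mul_one]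
      _ = volume S * volume (ball (0:E) r) / 2 := by rw [div_eq_mul_inv]
  rw [haB] at hcomb
  have hpos' : 0 < volume S * volume (ball (0:E) r) :=
    ENNReal.mul_pos hSpos.ne' hvr.ne'
  have hfin : volume S * volume (ball (0:E) r) ≠ ⊤ := ENNReal.mul_ne_top hSfin hvrfin
  exact absurd hcomb (not_le.mpr (ENNReal.half_lt_self hpos'.ne' hfin))

/-- The propagation step. -/
theorem step {β ε ρ : ℝ} (hβ0 : 0 < β) (hε : 0 < ε) (hρ : 0 < ρ)
    (u : E → ℝ) (hu : Measurable u) {C : ℝ} (hC : ∀ x, |u x| ≤ C) (hpos : ∀ x, 0 ≤ u x)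
    (hKEY : ∀ x' ∈ cube (fun _ : Fin N => (0 : ℝ)) (10 * Real.sqrt N),
      β * ∫ y in ball (0:E) 1, (u (x' + ε • y) + u (x' - ε • y))
        ≤ 2 * (volume (ball (0:E) 1)).toReal * (ρ + u x'))
    (y₀ y₁ : E)
    (hreg : ball y₁ (ε/2) ⊆ cube (fun _ : Fin N => (0 : ℝ)) (10 * Real.sqrt N))
    (hd : ‖y₁ - y₀‖ ≤ 3*ε/4) (m : ℝ)
    (h0 : ∀ x' ∈ ball y₀ (ε/2), m ≤ u x') :
    ∀ x' ∈ ball y₁ (ε/2), (β * (1/8:ℝ)^N / 2) * m - ρ ≤ u x' := by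
  intro x' hx'
  set θ : ℝ := β * (1/8:ℝ)^N / 2 with hθ
  have hθ0 : 0 < θ := by positivity
  rcases le_or_gt m 0 with hm | hm
  · have h1 : θ * m ≤ 0 := mul_nonpos_of_nonneg_of_nonpos hθ0.le hm
    have := hpos x'
    linarith
  have hd1 : ‖y₀ - x'‖ < 5*ε/4 := by
    have h1 : ‖x' - y₁‖ < ε/2 := by rwa [mem_ball, dist_eq_norm] at hx'
    calc ‖y₀ - x'‖ ≤ ‖y₀ - y₁‖ + ‖y₁ - x'‖ := by
          simpa using norm_add_le (y₀ - y₁) (y₁ - x')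
      _ < 5*ε/4 := by
          rw [norm_sub_rev y₀ y₁, norm_sub_rev y₁ x']
          linarith
  set c : E := ε⁻¹ • (y₀ - x') with hc
  have hnc : ‖c‖ ≤ 5/4 := by
    rw [hc, norm_smul, Real.norm_eq_abs, abs_of_pos (by positivity : (0:ℝ) < ε⁻¹)]
    rw [inv_mul_le_iff₀ hε]
    linarith
  obtain ⟨c', hc'⟩ := geom c hnc
  have hAB : ball c' (1/8) ⊆ ball (0:E) 1 := fun y hy => (hc' hy).2
  have hmA : ∀ y ∈ ball c' (1/8), m ≤ u (x' + ε • y) := by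
    intro y hy
    have h1 : y ∈ ball c (1/2) := (hc' hy).1
    have h2 : ‖y - c‖ < 1/2 := by rwa [mem_ball, dist_eq_norm] at h1
    apply h0
    rw [mem_ball, dist_eq_norm]
    have h3 : x' + ε • y - y₀ = ε • (y - c) := by
      rw [hc, smul_sub, smul_inv_smul₀ hε.ne']
      abel
    rw [h3, norm_smul, Real.norm_eq_abs, abs_of_pos hε]
    nlinarith
  have hlb := int_lb u hu hC hpos x' ε measurableSet_ball hAB hmA
  have hvol : (volume (ball c' (1/8:ℝ))).toReal
      = (1/8:ℝ)^N * (volume (ball (0:E) 1)).toReal := by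
    rw [Measure.addHaar_ball_of_pos volume c' (by norm_num : (0:ℝ) < 1/8)]
    rw [finrank_euclideanSpace_fin, ENNReal.toReal_mul, ENNReal.toReal_ofReal (by positivity)]
  rw [hvol] at hlb
  have hkey := hKEY x' (hreg hx')
  set vB : ℝ := (volume (ball (0:E) 1)).toReal with hvB
  have hvBpos : 0 < vB :=
    ENNReal.toReal_pos (measure_ball_pos volume _ one_pos).ne' measure_ball_lt_top.ne
  have h3 : β * (m * ((1/8:ℝ)^N * vB)) ≤ 2 * vB * (ρ + u x') :=
    le_trans (mul_le_mul_of_nonneg_left hlb hβ0.le) hkey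
  have h4 : θ * m * (2 * vB) ≤ (ρ + u x') * (2 * vB) := by
    calc θ * m * (2 * vB) = β * (m * ((1/8:ℝ)^N * vB)) := by rw [hθ]; ring
      _ ≤ 2 * vB * (ρ + u x') := h3
      _ = (ρ + u x') * (2 * vB) := by ring
  have h5 : θ * m ≤ ρ + u x' := le_of_mul_le_mul_right h4 (by positivity)
  linarith

/-- The chain lemma. -/
theorem chain (hN : 1 ≤ N) {β ε ρ : ℝ} (hβ0 : 0 < β) (hβ1 : β ≤ 1)
    (hε : 0 < ε) (hε1 : ε ≤ 1) (hρ : 0 < ρ)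
    (u : E → ℝ) (hu : Measurable u) {C : ℝ} (hC : ∀ x, |u x| ≤ C) (hpos : ∀ x, 0 ≤ u x)
    (hKEY : ∀ x' ∈ cube (fun _ : Fin N => (0 : ℝ)) (10 * Real.sqrt N),
      β * ∫ y in ball (0:E) 1, (u (x' + ε • y) + u (x' - ε • y))
        ≤ 2 * (volume (ball (0:E) 1)).toReal * (ρ + u x'))
    (x₀ x : E) (hx₀ : ‖x₀‖ ≤ 2 * Real.sqrt N) (hx : ‖x‖ ≤ 2 * Real.sqrt N)
    (n : ℕ) (hn : 1 ≤ n) (hnd : ‖x - x₀‖ ≤ n * (3*ε/4))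
    (m₀ : ℝ) (h0 : ∀ x' ∈ ball x₀ (ε/2), m₀ ≤ u x') :
    (β * (1/8:ℝ)^N / 2)^n * m₀ - n * ρ ≤ u x := by
  set θ : ℝ := β * (1/8:ℝ)^N / 2 with hθ
  have hθ0 : 0 < θ := by positivity
  have hθ1 : θ ≤ 1 := by
    have h8 : ((1:ℝ)/8)^N ≤ 1 := pow_le_one₀ (by norm_num) (by norm_num)
    nlinarith
  have hn0 : (0:ℝ) < n := by exact_mod_cast hn
  set y : ℕ → E := fun k => x₀ + ((k:ℝ)/n) • (x - x₀) with hy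
  have hynorm : ∀ k, k ≤ n → ‖y k‖ ≤ 2 * Real.sqrt N := by
    intro k hk
    have ht0 : (0:ℝ) ≤ (k:ℝ)/n := by positivity
    have ht1 : (k:ℝ)/n ≤ 1 := by
      rw [div_le_one hn0]; exact_mod_cast hk
    have hrw : y k = (1 - (k:ℝ)/n) • x₀ + ((k:ℝ)/n) • x := by
      rw [hy]
      simp only [smul_sub, sub_smul, one_smul]
      abel
    rw [hrw]
    calc ‖(1 - (k:ℝ)/n) • x₀ + ((k:ℝ)/n) • x‖
        ≤ ‖(1 - (k:ℝ)/n) • x₀‖ + ‖((k:ℝ)/n) • x‖ := norm_add_le _ _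
      _ = (1 - (k:ℝ)/n) * ‖x₀‖ + ((k:ℝ)/n) * ‖x‖ := by
          rw [norm_smul, norm_smul, Real.norm_eq_abs, Real.norm_eq_abs,
            abs_of_nonneg (by linarith), abs_of_nonneg ht0]
      _ ≤ (1 - (k:ℝ)/n) * (2 * Real.sqrt N) + ((k:ℝ)/n) * (2 * Real.sqrt N) := by
          have h1 : (0:ℝ) ≤ 1 - (k:ℝ)/n := by linarith
          have h2 := mul_le_mul_of_nonneg_left hx₀ h1
          have h3 := mul_le_mul_of_nonneg_left hx ht0
          linarith
      _ = 2 * Real.sqrt N := by ring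
  have hreg : ∀ k, k ≤ n →
      ball (y k) (ε/2) ⊆ cube (fun _ : Fin N => (0 : ℝ)) (10 * Real.sqrt N) := by
    intro k hk x' hx'
    apply mem_bigcube hN
    have h1 : ‖x' - y k‖ < ε/2 := by rwa [mem_ball, dist_eq_norm] at hx'
    calc ‖x'‖ ≤ ‖x' - y k‖ + ‖y k‖ := by simpa using norm_add_le (x' - y k) (y k)
      _ < ε/2 + 2 * Real.sqrt N := by linarith [hynorm k hk]
      _ ≤ 2 * Real.sqrt N + 1 := by linarith
  have claim : ∀ k, k ≤ n → ∀ x' ∈ ball (y k) (ε/2), θ^k * m₀ - k * ρ ≤ u x' := by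
    intro k
    induction k with
    | zero =>
      intro _ x' hx'
      have hy0 : y 0 = x₀ := by simp [hy]
      rw [hy0] at hx'
      simpa using h0 x' hx'
    | succ k ih =>
      intro hk x' hx'
      have hk' : k ≤ n := Nat.le_of_succ_le hk
      have hprev := ih hk'
      have hdk : ‖y (k+1) - y k‖ ≤ 3*ε/4 := by
        have h1 : y (k+1) - y k = ((1:ℝ)/n) • (x - x₀) := by
          rw [hy]
          simp only
          rw [add_sub_add_left_eq_sub, ← sub_smul]
          congr 1
          push_cast
          field_simp
          ring
        rw [h1, norm_smul, Real.norm_eq_abs, abs_of_pos (by positivity : (0:ℝ) < 1/n)]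
        calc 1/(n:ℝ) * ‖x - x₀‖ ≤ 1/(n:ℝ) * ((n:ℝ) * (3*ε/4)) := by
              apply mul_le_mul_of_nonneg_left hnd (by positivity)
          _ = 3*ε/4 := by field_simp
      have hstep := step hβ0 hε hρ u hu hC hpos hKEY (y k) (y (k+1))
        (hreg (k+1) hk) hdk (θ^k * m₀ - k * ρ) hprev x' hx'
      rw [← hθ] at hstep
      have h2 : θ * (θ^k * m₀ - k * ρ) - ρ ≥ θ^(k+1) * m₀ - (k+1) * ρ := by
        have hkρ : θ * ((k:ℝ) * ρ) ≤ (k:ℝ) * ρ := by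
          apply mul_le_of_le_one_left (by positivity) hθ1
        push_cast
        calc θ * (θ^k * m₀ - k * ρ) - ρ = θ^(k+1) * m₀ - θ * ((k:ℝ)*ρ) - ρ := by ring
          _ ≥ θ^(k+1) * m₀ - ((k:ℝ)*ρ) - ρ := by linarith
          _ = θ^(k+1) * m₀ - ((k:ℝ)+1) * ρ := by ring
      push_cast at h2 ⊢
      linarith [hstep, h2]
  have hyn : y n = x := by
    rw [hy]
    simp only
    rw [div_self hn0.ne', one_smul]
    abel
  exact claim n le_rfl x (by rw [hyn]; exact mem_ball_self (by positivity))

end MESecond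

set_option maxHeartbeats 1000000 in
/-- **Lemma `second`.** Let `0 < ε₀ < 1` and `ρ > 0`. There is a constant
`c > 0`, depending only on `N, Λ, α, β, ε₀, ρ`, such that: if `u` is bounded Borel measurable
with `L_ε^- u ≤ ρ` in `Q_{10√N}` and `u ≥ 0` in `ℝ^N`, for some `ε₀/2 ≤ ε ≤ ε₀`, and
`|{u > K} ∩ Q_1| > c/K` for some `K > 0`, then `u > 1` everywhere in `Q_1`. -/
theorem measure_estimate_second (N : ℕ) (hN : 1 ≤ N) (Λ α β : ℝ) (hΛ : 1 ≤ Λ)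
    (hβ : β ∈ Set.Ioc (0 : ℝ) 1) (hα : α = 1 - β)
    (ε₀ ρ : ℝ) (hε₀ : 0 < ε₀) (hε₀' : ε₀ < 1) (hρ : 0 < ρ) :
    ∃ c > (0 : ℝ),
      ∀ ε : ℝ, ε₀ / 2 ≤ ε → ε ≤ ε₀ →
        ∀ u : EuclideanSpace ℝ (Fin N) → ℝ,
          Measurable u → (∃ K, ∀ x, |u x| ≤ K) →
          (∀ x ∈ cube (fun _ : Fin N => (0 : ℝ)) (10 * Real.sqrt N),
            Lminus Λ α β ε u x ≤ ρ) →
          (∀ x, 0 ≤ u x) →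
          ∀ K : ℝ, 0 < K →
            ENNReal.ofReal (c / K) <
              volume ({x | K < u x} ∩ cube (fun _ : Fin N => (0 : ℝ)) 1) →
            ∀ x ∈ cube (fun _ : Fin N => (0 : ℝ)) 1, 1 < u x := by

  classical
  obtain ⟨hβ0, hβ1⟩ := hβ
  have hsqrt1 : (1:ℝ) ≤ Real.sqrt N := Real.one_le_sqrt.mpr (by exact_mod_cast hN)
  have hsqrt0 : (0:ℝ) < Real.sqrt N := by linarith
  obtain ⟨θ, hθ⟩ : ∃ θ : ℝ, θ = β * (1/8:ℝ)^N / 2 := ⟨_, rfl⟩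
  have hθ0 : 0 < θ := by rw [hθ]; positivity
  obtain ⟨n, hn1, h8n⟩ : ∃ n : ℕ, 1 ≤ n ∧ 8 * Real.sqrt N / ε₀ ≤ (n:ℝ) :=
    ⟨⌈8 * Real.sqrt N / ε₀⌉₊ + 1, by omega,
      by push_cast; linarith [Nat.le_ceil (8 * Real.sqrt N / ε₀)]⟩
  have hncast : (0:ℝ) ≤ (n:ℝ) := Nat.cast_nonneg n
  obtain ⟨vB, hvB⟩ : ∃ vB : ℝ, vB = (volume (ball (0:EuclideanSpace ℝ (Fin N)) 1)).toReal :=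
    ⟨_, rfl⟩
  obtain ⟨v₀, hv₀⟩ : ∃ v₀ : ℝ,
      v₀ = (volume (ball (0:EuclideanSpace ℝ (Fin N)) (ε₀/4))).toReal := ⟨_, rfl⟩
  obtain ⟨V, hV⟩ : ∃ V : ℝ,
      V = (volume (ball (0:EuclideanSpace ℝ (Fin N)) (Real.sqrt N + 1))).toReal := ⟨_, rfl⟩
  have hvBpos : 0 < vB := by
    rw [hvB]
    exact ENNReal.toReal_pos (measure_ball_pos volume _ one_pos).ne' measure_ball_lt_top.ne
  have hv₀pos : 0 < v₀ := by
    rw [hv₀]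
    exact ENNReal.toReal_pos (measure_ball_pos volume _ (by positivity)).ne' measure_ball_lt_top.ne
  have hVpos : 0 < V := by
    rw [hV]
    exact ENNReal.toReal_pos (measure_ball_pos volume _ (by positivity)).ne' measure_ball_lt_top.ne
  obtain ⟨m₀, hm₀⟩ : ∃ m₀ : ℝ, m₀ = (2 + n * ρ) / θ ^ n := ⟨_, rfl⟩
  have h2nρ : (0:ℝ) < 2 + n * ρ := by nlinarith [mul_nonneg hncast hρ.le]
  have hm₀pos : 0 < m₀ := by rw [hm₀]; exact div_pos h2nρ (by positivity)
  obtain ⟨c, hcdef⟩ : ∃ c : ℝ, c = (4 * vB * V / (β * v₀)) * (m₀ + ρ) := ⟨_, rfl⟩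
  have hcpos : 0 < c := by
    rw [hcdef]
    exact mul_pos (div_pos (by positivity) (mul_pos hβ0 hv₀pos)) (by linarith)
  have h11 : β * (c * v₀ / (2*V)) = 2 * vB * (m₀ + ρ) := by
    rw [hcdef]
    field_simp
    ring
  refine ⟨c, hcpos, ?_⟩
  intro ε hεl hεu u hu hbd hL hpos K hK hmeas x hxQ
  obtain ⟨C, hC⟩ := hbd
  have hε : 0 < ε := lt_of_lt_of_le (by linarith) hεl
  have hε1 : ε ≤ 1 := le_of_lt (lt_of_le_of_lt hεu hε₀')
  have hKEY : ∀ x' ∈ cube (fun _ : Fin N => (0:ℝ)) (10 * Real.sqrt N),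
      β * ∫ y in ball (0:EuclideanSpace ℝ (Fin N)) 1, (u (x' + ε • y) + u (x' - ε • y))
        ≤ 2 * vB * (ρ + u x') := by
    intro x' hx'
    rw [hvB]
    exact MESecond.key Λ α β ε ρ hβ1 hα hΛ hε hε1 hρ.le u hu hC hpos x' (hL x' hx')
  obtain ⟨S, hSdef⟩ : ∃ S : Set (EuclideanSpace ℝ (Fin N)),
      S = {x | K < u x} ∩ cube (fun _ : Fin N => (0:ℝ)) 1 := ⟨_, rfl⟩
  rw [← hSdef] at hmeas
  have hcubemeas : MeasurableSet (cube (fun _ : Fin N => (0:ℝ)) 1) := by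
    have h : cube (fun _ : Fin N => (0:ℝ)) 1
        = ⋂ i, {y : EuclideanSpace ℝ (Fin N) | |y i - 0| < 1/2} := by
      ext y; simp only [cube, Set.mem_setOf_eq, Set.mem_iInter]
    rw [h]
    apply MeasurableSet.iInter
    intro i
    have hcoord : Measurable fun y : EuclideanSpace ℝ (Fin N) => y i :=
      (measurable_pi_apply (X := fun _ : Fin N => ℝ) i).comp
        (MeasurableEquiv.toLp 2 (Fin N → ℝ)).symm.measurable
    exact measurableSet_lt ((hcoord.sub_const 0).abs) measurable_const
  have hSmeas : MeasurableSet S := by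
    rw [hSdef]; exact (measurableSet_lt measurable_const hu).inter hcubemeas
  have hsub : S ⊆ ball (0:EuclideanSpace ℝ (Fin N)) (Real.sqrt N) := by
    rw [hSdef]
    intro y hy
    rw [mem_ball, dist_zero_right]
    have := MESecond.cube_norm y hy.2
    linarith
  have hSpos : 0 < volume S := lt_trans (ENNReal.ofReal_pos.mpr (div_pos hcpos hK)) hmeas
  have hSfin : volume S ≠ ⊤ := ((measure_mono hsub).trans_lt measure_ball_lt_top).ne
  obtain ⟨x₀, hx₀mem, hx₀⟩ :=
    MESecond.exists_good_center hSmeas (half_pos hε) hsqrt0 hsub hSpos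
  have hx₀n : ‖x₀‖ < Real.sqrt N + ε/2 := by rwa [mem_ball, dist_zero_right] at hx₀mem
  have hSreal : c / K < (volume S).toReal := by
    have h := (ENNReal.toReal_lt_toReal ENNReal.ofReal_ne_top hSfin).mpr hmeas
    rwa [ENNReal.toReal_ofReal (by positivity)] at h
  obtain ⟨S', hS'def⟩ : ∃ S' : Set (EuclideanSpace ℝ (Fin N)),
      S' = S ∩ ball x₀ (ε/2) := ⟨_, rfl⟩
  rw [← hS'def] at hx₀
  have hS'fin : volume S' ≠ ⊤ := by
    rw [hS'def]
    exact ((measure_mono Set.inter_subset_left).trans_lt hSfin.lt_top).ne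
  have hq : ENNReal.ofReal (c/K) * volume (ball (0:EuclideanSpace ℝ (Fin N)) (ε₀/4))
      / (2 * volume (ball (0:EuclideanSpace ℝ (Fin N)) (Real.sqrt N + 1))) ≤ volume S' := by
    refine le_trans ?_ hx₀
    apply ENNReal.div_le_div
    · exact mul_le_mul' hmeas.le (measure_mono (ball_subset_ball (by linarith)))
    · exact mul_le_mul_right (measure_mono (ball_subset_ball (by linarith))) 2
  have hS'real : (c/K) * v₀ / (2 * V) ≤ (volume S').toReal := by
    have h1 := ENNReal.toReal_mono hS'fin hq
    refine le_trans (le_of_eq ?_) h1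
    rw [ENNReal.toReal_div, ENNReal.toReal_mul, ENNReal.toReal_mul,
      ENNReal.toReal_ofReal (by positivity : (0:ℝ) ≤ c/K), ENNReal.toReal_ofNat,
      ← hv₀, ← hV]
  have hbase : ∀ x' ∈ ball x₀ (ε/2), m₀ ≤ u x' := by
    intro x' hx'
    have hx'x₀ : ‖x' - x₀‖ < ε/2 := by rwa [mem_ball, dist_eq_norm] at hx'
    have hx'cube : x' ∈ cube (fun _ : Fin N => (0:ℝ)) (10 * Real.sqrt N) := by
      apply MESecond.mem_bigcube hN
      calc ‖x'‖ ≤ ‖x' - x₀‖ + ‖x₀‖ := by simpa using norm_add_le (x' - x₀) x₀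
        _ < 2 * Real.sqrt N + 1 := by linarith
    obtain ⟨A₀, hA₀⟩ : ∃ A₀ : Set (EuclideanSpace ℝ (Fin N)),
      A₀ = (fun y : EuclideanSpace ℝ (Fin N) => x' + ε • y) ⁻¹' S' := ⟨_, rfl⟩
    have hS'meas : MeasurableSet S' := by
      rw [hS'def]; exact hSmeas.inter measurableSet_ball
    have hA₀meas : MeasurableSet A₀ := by
      rw [hA₀]
      exact hS'meas.preimage (measurable_const.add (measurable_id.const_smul ε))
    have hA₀sub : A₀ ⊆ ball (0:EuclideanSpace ℝ (Fin N)) 1 := by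
      intro y hy
      rw [hA₀, hS'def] at hy
      have h1 : x' + ε • y ∈ ball x₀ (ε/2) := hy.2
      have h2 : ‖x' + ε • y - x₀‖ < ε/2 := by rwa [mem_ball, dist_eq_norm] at h1
      rw [mem_ball, dist_zero_right]
      have h3 : ‖ε • y‖ < ε := by
        calc ‖ε • y‖ = ‖(x' + ε • y - x₀) - (x' - x₀)‖ := by congr 1; abel
          _ ≤ ‖x' + ε • y - x₀‖ + ‖x' - x₀‖ := norm_sub_le _ _
          _ < ε := by linarith
      rw [norm_smul, Real.norm_eq_abs, abs_of_pos hε] at h3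
      have h4 : ε * ‖y‖ < ε * 1 := by linarith
      exact (mul_lt_mul_iff_right₀ hε).mp h4
    have hmA : ∀ y ∈ A₀, K ≤ u (x' + ε • y) := by
      intro y hy
      rw [hA₀, hS'def, hSdef] at hy
      exact (hy.1.1).le
    have hlb := MESecond.int_lb u hu hC hpos x' ε hA₀meas hA₀sub hmA
    have hpre : volume S' ≤ volume A₀ := by
      rw [hA₀]
      exact MESecond.preimage_meas_ge S' x' hε hε1
    have hA₀fin : volume A₀ ≠ ⊤ := ((measure_mono hA₀sub).trans_lt measure_ball_lt_top).ne
    have h6 : (volume S').toReal ≤ (volume A₀).toReal := ENNReal.toReal_mono hA₀fin hpre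
    have hkey := hKEY x' hx'cube
    have h7 : β * (K * ((volume S').toReal)) ≤ 2 * vB * (ρ + u x') := by
      calc β * (K * (volume S').toReal) ≤ β * (K * (volume A₀).toReal) := by
            apply mul_le_mul_of_nonneg_left (mul_le_mul_of_nonneg_left h6 hK.le) hβ0.le
        _ ≤ β * ∫ y in ball (0:EuclideanSpace ℝ (Fin N)) 1,
              (u (x' + ε • y) + u (x' - ε • y)) := by
            apply mul_le_mul_of_nonneg_left hlb hβ0.le
        _ ≤ 2 * vB * (ρ + u x') := hkey
    have h9 : β * (K * ((c/K) * v₀ / (2*V))) ≤ 2 * vB * (ρ + u x') := by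
      refine le_trans ?_ h7
      apply mul_le_mul_of_nonneg_left (mul_le_mul_of_nonneg_left hS'real hK.le) hβ0.le
    have h10 : K * ((c/K) * v₀ / (2*V)) = c * v₀ / (2*V) := by
      field_simp
    rw [h10, h11] at h9
    have h12 : m₀ + ρ ≤ ρ + u x' := by
      have h13 : (2*vB) * (m₀+ρ) ≤ (2*vB) * (ρ + u x') := by linarith [h9]
      exact le_of_mul_le_mul_left h13 (by positivity)
    linarith [h12]
  have hxnorm : ‖x‖ ≤ Real.sqrt N / 2 := MESecond.cube_norm x hxQ
  have hnd : ‖x - x₀‖ ≤ n * (3*ε/4) := by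
    have h2 : 8 * Real.sqrt N ≤ (n:ℝ) * ε₀ := by
      have h1 := h8n
      rw [div_le_iff₀ hε₀] at h1; linarith
    have h3 : (n:ℝ) * ε₀ ≤ (n:ℝ) * (2*ε) := by
      apply mul_le_mul_of_nonneg_left (by linarith) hncast
    have h4 : ‖x - x₀‖ ≤ 3 * Real.sqrt N := by
      calc ‖x - x₀‖ ≤ ‖x‖ + ‖x₀‖ := norm_sub_le x x₀
        _ ≤ 3 * Real.sqrt N := by linarith
    linarith [h2, h3, h4]
  have hKEY' : ∀ x' ∈ cube (fun _ : Fin N => (0:ℝ)) (10 * Real.sqrt N),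
      β * ∫ y in ball (0:EuclideanSpace ℝ (Fin N)) 1, (u (x' + ε • y) + u (x' - ε • y))
        ≤ 2 * (volume (ball (0:EuclideanSpace ℝ (Fin N)) 1)).toReal * (ρ + u x') := by
    intro x' hx'
    rw [← hvB]
    exact hKEY x' hx'
  have hchain := MESecond.chain hN hβ0 hβ1 hε hε1 hρ u hu hC hpos hKEY' x₀ x
    (by linarith : ‖x₀‖ ≤ 2 * Real.sqrt N) (by linarith : ‖x‖ ≤ 2 * Real.sqrt N)
    n hn1 hnd m₀ hbase
  rw [← hθ] at hchain
  have hfin : θ^n * m₀ = 2 + n * ρ := by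
    rw [hm₀]
    field_simp
  linarith [hchain, hfin]
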